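/- For μ > 0 fixed, the function τ ↦ (1 - e^{-μτ})/(μτ) is strictly convex on (0, ∞). -/

import Mathlib

open Real

private lemma quad_lt_exp {x : ℝ} (hx : 0 < x) : x ^ 2 + 2 * x + 2 < 2 * Real.exp x := by
  have h := Real.sum_le_exp_of_nonneg hx.le 4
  have hsum : (1 : ℝ) + x + x ^ 2 / 2 + x ^ 3 / 6 ≤ Real.exp x := by
    have heq : ∑ i ∈ Finset.range 4, x ^ i / (Nat.factorial i : ℝ)
        = 1 + x + x ^ 2 / 2 + x ^ 3 / 6 := by
      simp [Finset.sum_range_succ, Nat.factorial]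
    rw [heq] at h
    exact h
  nlinarith [pow_pos hx 3]

/-- For fixed `μ > 0`, the function `τ ↦ (1 - exp (-μ τ))/(μ τ)` is strictly convex
on `(0, ∞)`. -/
theorem confirm_prob_strictConvex (μ : ℝ) (hμ : 0 < μ) :
    StrictConvexOn ℝ (Set.Ioi (0:ℝ))
      (fun τ : ℝ => (1 - Real.exp (-(μ * τ))) / (μ * τ)) := by
  set f : ℝ → ℝ := fun τ => (1 - Real.exp (-(μ * τ))) / (μ * τ) with hf
  set g : ℝ → ℝ := fun τ =>
    Real.exp (-(μ * τ)) / τ - (1 - Real.exp (-(μ * τ))) / (μ * τ ^ 2) with hg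
  have hexp : ∀ τ : ℝ, HasDerivAt (fun t : ℝ => Real.exp (-(μ * t)))
      (-μ * Real.exp (-(μ * τ))) τ := by
    intro τ
    have h0 : HasDerivAt (fun t : ℝ => -(μ * t)) (-μ) τ := by
      simpa using ((hasDerivAt_id τ).const_mul μ).fun_neg
    simpa [mul_comm] using h0.exp
  have hd1 : ∀ τ : ℝ, 0 < τ → HasDerivAt f (g τ) τ := by
    intro τ hτ
    have hne : μ * τ ≠ 0 := (mul_pos hμ hτ).ne'
    have h1 : HasDerivAt (fun t : ℝ => 1 - Real.exp (-(μ * t)))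
        (μ * Real.exp (-(μ * τ))) τ := by
      simpa using ((hexp τ).const_sub 1)
    have h2 : HasDerivAt (fun t : ℝ => μ * t) μ τ := by
      simpa using (hasDerivAt_id τ).const_mul μ
    have := h1.fun_div h2 hne
    refine this.congr_deriv ?_
    simp only [hg]
    field_simp
  have hd2 : ∀ τ : ℝ, 0 < τ →
      HasDerivAt g ((2 - Real.exp (-(μ * τ)) * (μ ^ 2 * τ ^ 2 + 2 * (μ * τ) + 2)) /
        (μ * τ ^ 3)) τ := by
    intro τ hτ
    have hτne : τ ≠ 0 := hτ.ne'
    have ha : HasDerivAt (fun t : ℝ => Real.exp (-(μ * t)) / t)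
        ((-μ * Real.exp (-(μ * τ)) * τ - Real.exp (-(μ * τ)) * 1) / τ ^ 2) τ :=
      (hexp τ).div (hasDerivAt_id τ) hτne
    have hb : HasDerivAt (fun t : ℝ => (1 - Real.exp (-(μ * t))) / (μ * t ^ 2))
        ((μ * Real.exp (-(μ * τ)) * (μ * τ ^ 2) - (1 - Real.exp (-(μ * τ))) * (μ * (2 * τ))) /
          (μ * τ ^ 2) ^ 2) τ := by
      have h1 : HasDerivAt (fun t : ℝ => 1 - Real.exp (-(μ * t)))
          (μ * Real.exp (-(μ * τ))) τ := by
        simpa using ((hexp τ).const_sub 1)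
      have h2 : HasDerivAt (fun t : ℝ => μ * t ^ 2) (μ * (2 * τ)) τ := by
        simpa [mul_comm] using ((hasDerivAt_pow 2 τ).const_mul μ)
      exact h1.div h2 (by positivity)
    have := ha.fun_sub hb
    refine this.congr_deriv ?_
    have hE := Real.exp_pos (-(μ * τ))
    field_simp
    ring
  apply strictConvexOn_of_deriv2_pos (convex_Ioi 0)
  · apply ContinuousOn.div
    · fun_prop
    · fun_prop
    · intro x hx
      exact (mul_pos hμ hx).ne'
  · intro x hx
    rw [interior_Ioi] at hx
    have hmem : Set.Ioi (0:ℝ) ∈ nhds x := isOpen_Ioi.mem_nhds hx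
    have heq : deriv f =ᶠ[nhds x] g :=
      Filter.eventually_of_mem hmem fun y hy => (hd1 y hy).deriv
    have h2 : deriv (deriv f) x = deriv g x := heq.deriv_eq
    have h3 : deriv g x =
        (2 - Real.exp (-(μ * x)) * (μ ^ 2 * x ^ 2 + 2 * (μ * x) + 2)) / (μ * x ^ 3) :=
      (hd2 x hx).deriv
    have hx0 : (0:ℝ) < x := hx
    have hxm : 0 < μ * x := mul_pos hμ hx0
    have hnum : 0 < 2 - Real.exp (-(μ * x)) * (μ ^ 2 * x ^ 2 + 2 * (μ * x) + 2) := by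
      have hq := quad_lt_exp hxm
      have hE : Real.exp (-(μ * x)) = 1 / Real.exp (μ * x) := by
        rw [Real.exp_neg]; ring
      have hEp : 0 < Real.exp (μ * x) := Real.exp_pos _
      rw [hE]
      rw [div_mul_eq_mul_div, sub_pos, div_lt_iff₀ hEp]
      nlinarith
    have : (0:ℝ) < (2 - Real.exp (-(μ * x)) * (μ ^ 2 * x ^ 2 + 2 * (μ * x) + 2)) /
        (μ * x ^ 3) := by positivity
    simp only [Function.iterate_succ, Function.iterate_zero, Function.comp_apply, id]
    rw [show deriv (deriv f) x = deriv g x from h2, h3]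
    exact this
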